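/- Let G be a Class 2 simple graph with maximum degree Δ and let F = F_φ(r, s₁:s_p) be a multifan with respect to a critical edge e = rs₁ and a coloring φ ∈ C^Δ(G−e). Let δ ∈ φ̄(s_i) and λ ∈ φ̄(s_j) with i, j ∈ [1,p] and i ≠ j. If δ and λ are induced by the same color α ∈ φ̄(s₁), δ ≺ λ, and s_i and s_j are (δ,λ)-unlinked with respect to φ, then r lies on the (δ,λ)-chain containing s_j. -/

import Mathlib

/-- `c` is a proper edge coloring of `G` using colors in `{1, …, k}`:
every edge gets a color in `[1,k]`, and distinct edges sharing an endpoint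
get distinct colors. -/
def IsEdgeColoring {V : Type*} (G : SimpleGraph V) (k : ℕ) (c : Sym2 V → ℕ) : Prop :=
  (∀ e ∈ G.edgeSet, 1 ≤ c e ∧ c e ≤ k) ∧
    ∀ e ∈ G.edgeSet, ∀ f ∈ G.edgeSet, e ≠ f → (∃ v, v ∈ e ∧ v ∈ f) → c e ≠ c f

/-- The chromatic index `χ'(G)`: the least `k` admitting a proper edge `k`-coloring. -/
noncomputable def chromIndex {V : Type*} (G : SimpleGraph V) : ℕ :=
  sInf {k | ∃ c, IsEdgeColoring G k c}

/-- An edge `e` of `G` is critical if `χ'(G-e) < χ'(G)`. -/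
def IsCriticalEdge {V : Type*} (G : SimpleGraph V) (e : Sym2 V) : Prop :=
  e ∈ G.edgeSet ∧ chromIndex (G.deleteEdges {e}) < chromIndex G

/-- The set of colors of `[1,k]` missing at `v` under the coloring `c` of `G`. -/
def missingColors {V : Type*} (G : SimpleGraph V) (k : ℕ) (c : Sym2 V → ℕ) (v : V) : Set ℕ :=
  {α | 1 ≤ α ∧ α ≤ k ∧ ∀ e ∈ G.edgeSet, v ∈ e → c e ≠ α}

/-- `G` is `Δ`-critical: `Δ` is the maximum degree of `G`, `χ'(G) = Δ+1`, and every
proper subgraph has chromatic index less than `Δ+1`. -/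
def IsDeltaCritical {V : Type*} [Fintype V] (G : SimpleGraph V) [DecidableRel G.Adj]
    (Δ : ℕ) : Prop :=
  G.maxDegree = Δ ∧ chromIndex G = Δ + 1 ∧
    ∀ H : SimpleGraph V, H ≤ G → H ≠ G → chromIndex H < Δ + 1

/-- A Kierstead path `(v₀, v₀v₁, v₁, …, v_{p-1}v_p, v_p)` with respect to the edge
`v₀v₁` and a `k`-coloring `c` of `G - v₀v₁`, encoded by the list `P = [v₀, …, v_p]`. -/
structure IsKiersteadPath {V : Type*} (G : SimpleGraph V) (k : ℕ) (c : Sym2 V → ℕ)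
    (P : List V) : Prop where
  two_le : 2 ≤ P.length
  nodup : P.Nodup
  adj : ∀ (i : ℕ) (h : i + 1 < P.length), G.Adj (P[i]'(by omega)) (P[i+1]'h)
  color : ∀ (i : ℕ) (h : i + 1 < P.length), 1 ≤ i →
      ∃ (j : ℕ) (_ : j ≤ i),
        c (s(P[i]'(by omega), P[i+1]'h)) ∈
          missingColors (G.deleteEdges {s(P[0]'(by omega), P[1]'(by omega))}) k c
            (P[j]'(by omega))

/-- A multifan centered at `r` with respect to the edge `r s₁` and a `k`-coloring `c` of
`G - r s₁`, encoded by `r` and the list `sl = [s₁, …, s_p]`. -/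
structure IsMultifan {V : Type*} (G : SimpleGraph V) (k : ℕ) (c : Sym2 V → ℕ)
    (r : V) (sl : List V) : Prop where
  one_le : 1 ≤ sl.length
  nodup : (r :: sl).Nodup
  adj : ∀ (i : ℕ) (h : i < sl.length), G.Adj r (sl[i]'h)
  color : ∀ (i : ℕ) (h : i < sl.length), 1 ≤ i →
      ∃ (j : ℕ) (_ : j < i),
        c (s(r, sl[i]'h)) ∈
          missingColors (G.deleteEdges {s(r, sl[0]'(by omega))}) k c
            (sl[j]'(by omega))

/-- The subgraph of `G` whose edges are the edges colored `α` or `β` by `c`;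
its components are the `(α,β)`-chains. -/
def chainGraph {V : Type*} (G : SimpleGraph V) (c : Sym2 V → ℕ) (α β : ℕ) :
    SimpleGraph V where
  Adj x y := G.Adj x y ∧ (c (s(x, y)) = α ∨ c (s(x, y)) = β)
  symm := ⟨by
    intro x y hxy
    refine ⟨hxy.1.symm, ?_⟩
    rw [Sym2.eq_swap]
    exact hxy.2⟩
  loopless := ⟨fun x hx => G.loopless.irrefl x hx.1⟩

/-- `x` and `y` are `(α,β)`-linked with respect to the coloring `c` of `G`:
they belong to the same `(α,β)`-chain. -/
def Linked {V : Type*} (G : SimpleGraph V) (c : Sym2 V → ℕ) (α β : ℕ) (x y : V) : Prop :=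
  (chainGraph G c α β).Reachable x y


/-- An `α`-sequence of the multifan `(r, sl)` with respect to the coloring `c` of `G'`
(`G' = G - r s₁`): a nonempty subsequence `T = s_{ℓ₁}, …, s_{ℓ_k}` of `sl` with
`c (r s_{ℓ₁}) = α ∈ c̄(s₁)` and `c (r s_{ℓ_i}) ∈ c̄(s_{ℓ_{i-1}})` for `i ∈ [2,k]`. -/
structure IsAlphaSeq {V : Type*} (G' : SimpleGraph V) (k : ℕ) (c : Sym2 V → ℕ)
    (r s₁ : V) (sl : List V) (α : ℕ) (T : List V) : Prop where
  ne : T ≠ []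
  sub : T.Sublist sl
  alpha_missing : α ∈ missingColors G' k c s₁
  color_first : c (s(r, T.head ne)) = α
  chain : ∀ (i : ℕ) (h : i + 1 < T.length),
    c (s(r, T[i+1]'h)) ∈ missingColors G' k c (T[i]'(by omega))

/-- The color `β` is induced by `α` (i.e. `β` is an `α`-inducing color) with respect to
the multifan `(r, sl)`: either `β = α`, or `β` is missing at some vertex of an
`α`-sequence. -/
def InducedBy {V : Type*} (G' : SimpleGraph V) (k : ℕ) (c : Sym2 V → ℕ)
    (r s₁ : V) (sl : List V) (β α : ℕ) : Prop :=
  β = α ∨ ∃ T : List V, IsAlphaSeq G' k c r s₁ sl α T ∧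
    ∃ v ∈ T, β ∈ missingColors G' k c v

/-- `δ ≺ β` for two `α`-inducing colors `δ, β`: either `δ = α` and `β ≠ α` is
`α`-inducing, or there is an `α`-sequence `s_{ℓ₁}, …, s_{ℓ_k}` with
`δ ∈ c̄(s_{ℓ_i})`, `β ∈ c̄(s_{ℓ_j})` and `i < j`. -/
def PrecColor {V : Type*} (G' : SimpleGraph V) (k : ℕ) (c : Sym2 V → ℕ)
    (r s₁ : V) (sl : List V) (α δ β : ℕ) : Prop :=
  (δ = α ∧ β ≠ α ∧ InducedBy G' k c r s₁ sl β α) ∨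
  ∃ T : List V, IsAlphaSeq G' k c r s₁ sl α T ∧
    ∃ (i j : ℕ) (hi : i < T.length) (hj : j < T.length), i < j ∧
      δ ∈ missingColors G' k c (T[i]'hi) ∧ β ∈ missingColors G' k c (T[j]'hj)

section Machinery
set_option linter.unusedSectionVars false

open SimpleGraph List

variable {V : Type*} [DecidableEq V]

private lemma sym2_mk_eq_right {r x y : V} (hx : x ≠ r) (h : s(r, x) = s(r, y)) :
    x = y := by
  rw [Sym2.eq_iff] at h
  rcases h with ⟨-, h⟩ | ⟨-, h2⟩
  · exact h
  · exact absurd h2 hx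

private lemma edge_decomp {H : SimpleGraph V} {f : Sym2 V} (hf : f ∈ H.edgeSet) {v : V}
    (hv : v ∈ f) : ∃ w, f = s(v, w) ∧ H.Adj v w := by
  induction f with
  | _ x y =>
    rw [Sym2.mem_iff] at hv
    rcases hv with rfl | rfl
    · exact ⟨y, rfl, hf⟩
    · exact ⟨x, Sym2.eq_swap.symm, ((H.mem_edgeSet).mp hf).symm⟩

/-- swap of two colors -/
def csw (a b c : ℕ) : ℕ := if c = a then b else if c = b then a else c

lemma csw_csw (a b c : ℕ) : csw a b (csw a b c) = c := by
  unfold csw; split_ifs <;> omega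

lemma csw_inj (a b : ℕ) {c d : ℕ} (h : csw a b c = csw a b d) : c = d := by
  unfold csw at h; split_ifs at h <;> omega

lemma csw_range {Δ a b c : ℕ} (ha : 1 ≤ a ∧ a ≤ Δ) (hb : 1 ≤ b ∧ b ≤ Δ)
    (hc : 1 ≤ c ∧ c ≤ Δ) : 1 ≤ csw a b c ∧ csw a b c ≤ Δ := by
  unfold csw; split_ifs <;> omega

lemma csw_of_ne {a b c : ℕ} (h1 : c ≠ a) (h2 : c ≠ b) : csw a b c = c := by
  unfold csw; rw [if_neg h1, if_neg h2]

lemma csw_left (a b : ℕ) : csw a b a = b := by unfold csw; simp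

lemma chainGraph_adj {H : SimpleGraph V} {ψ : Sym2 V → ℕ} {a b : ℕ} {x y : V} :
    (chainGraph H ψ a b).Adj x y ↔
      H.Adj x y ∧ (ψ (s(x, y)) = a ∨ ψ (s(x, y)) = b) := Iff.rfl

open Classical in
/-- Kempe swap of colors `a`, `b` on the `(a,b)`-chain containing `z`. -/
noncomputable def swapC (H : SimpleGraph V) (ψ : Sym2 V → ℕ) (a b : ℕ) (z : V) :
    Sym2 V → ℕ := fun f =>
  if f ∈ H.edgeSet ∧ (ψ f = a ∨ ψ f = b) ∧ ∃ x ∈ f, (chainGraph H ψ a b).Reachable z x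
  then csw a b (ψ f) else ψ f

lemma swapC_eq_of_not_reach {H : SimpleGraph V} {ψ : Sym2 V → ℕ} {a b : ℕ} {z : V}
    {f : Sym2 V} {v : V} (hf : f ∈ H.edgeSet) (hv : v ∈ f)
    (hnr : ¬ (chainGraph H ψ a b).Reachable z v) : swapC H ψ a b z f = ψ f := by
  unfold swapC
  rw [if_neg]
  rintro ⟨hfe, hc, x, hx, hrx⟩
  obtain ⟨w, rfl, hadj⟩ := edge_decomp hfe hx
  rw [Sym2.mem_iff] at hv
  rcases hv with rfl | rfl
  · exact hnr hrx
  · exact hnr (hrx.trans (SimpleGraph.Adj.reachable ⟨hadj, hc⟩))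

lemma swapC_eq_csw_of_reach {H : SimpleGraph V} {ψ : Sym2 V → ℕ} {a b : ℕ} {z : V}
    {f : Sym2 V} {v : V} (hf : f ∈ H.edgeSet) (hv : v ∈ f)
    (hr : (chainGraph H ψ a b).Reachable z v) : swapC H ψ a b z f = csw a b (ψ f) := by
  unfold swapC
  by_cases hc : ψ f = a ∨ ψ f = b
  · rw [if_pos ⟨hf, hc, v, hv, hr⟩]
  · push_neg at hc
    rw [if_neg (fun h => absurd h.2.1 (by push_neg; exact hc)), csw_of_ne hc.1 hc.2]

lemma swapC_proper {H : SimpleGraph V} {ψ : Sym2 V → ℕ} {Δ a b : ℕ} {z : V}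
    (hψ : IsEdgeColoring H Δ ψ) (ha : 1 ≤ a ∧ a ≤ Δ) (hb : 1 ≤ b ∧ b ≤ Δ) :
    IsEdgeColoring H Δ (swapC H ψ a b z) := by
  constructor
  · intro f hf
    unfold swapC
    split_ifs with h
    · exact csw_range ha hb (hψ.1 f hf)
    · exact hψ.1 f hf
  · intro f hf g hg hne hv
    obtain ⟨v, hvf, hvg⟩ := hv
    by_cases hr : (chainGraph H ψ a b).Reachable z v
    · rw [swapC_eq_csw_of_reach hf hvf hr, swapC_eq_csw_of_reach hg hvg hr]
      intro h
      exact hψ.2 f hf g hg hne ⟨v, hvf, hvg⟩ (csw_inj a b h)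
    · rw [swapC_eq_of_not_reach hf hvf hr, swapC_eq_of_not_reach hg hvg hr]
      exact hψ.2 f hf g hg hne ⟨v, hvf, hvg⟩

lemma swapC_missing_of_not_reach (H : SimpleGraph V) (Δ : ℕ) {ψ : Sym2 V → ℕ} {a b : ℕ}
    {z v : V} (hnr : ¬ (chainGraph H ψ a b).Reachable z v) :
    missingColors H Δ (swapC H ψ a b z) v = missingColors H Δ ψ v := by
  ext c
  constructor <;> rintro ⟨h1, h2, h3⟩ <;> refine ⟨h1, h2, fun f hf hvf => ?_⟩
  · have := h3 f hf hvf
    rwa [swapC_eq_of_not_reach hf hvf hnr] at this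
  · rw [swapC_eq_of_not_reach hf hvf hnr]
    exact h3 f hf hvf

lemma swapC_missing_of_reach (H : SimpleGraph V) (Δ : ℕ) {ψ : Sym2 V → ℕ} {a b c : ℕ}
    {z v : V} (ha : 1 ≤ a ∧ a ≤ Δ) (hb : 1 ≤ b ∧ b ≤ Δ)
    (hr : (chainGraph H ψ a b).Reachable z v) :
    c ∈ missingColors H Δ (swapC H ψ a b z) v ↔ csw a b c ∈ missingColors H Δ ψ v := by
  constructor <;> rintro ⟨h1, h2, h3⟩
  · refine ⟨(csw_range ha hb ⟨h1, h2⟩).1, (csw_range ha hb ⟨h1, h2⟩).2, fun f hf hvf hc => ?_⟩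
    exact h3 f hf hvf (by rw [swapC_eq_csw_of_reach hf hvf hr, hc, csw_csw])
  · have hc : 1 ≤ c ∧ c ≤ Δ := by
      have := csw_range ha hb ⟨h1, h2⟩
      rwa [csw_csw] at this
    refine ⟨hc.1, hc.2, fun f hf hvf hcc => ?_⟩
    rw [swapC_eq_csw_of_reach hf hvf hr] at hcc
    exact h3 f hf hvf (csw_inj a b (by rw [hcc, csw_csw]))

private lemma mem_support_of_mem_edges' {H : SimpleGraph V} {c d x : V} (pp : H.Walk c d)
    {f : Sym2 V} (hf : f ∈ pp.edges) (hxf : x ∈ f) : x ∈ pp.support := by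
  induction f with
  | _ c1 c2 =>
    rw [Sym2.mem_iff] at hxf
    rcases hxf with rfl | rfl
    · exact pp.fst_mem_support_of_mem_edges hf
    · exact pp.snd_mem_support_of_mem_edges hf

lemma chain_leaf {H : SimpleGraph V} {Δ : ℕ} {ψ : Sym2 V → ℕ} {a b c : ℕ} {v : V}
    (hψ : IsEdgeColoring H Δ ψ) (hmiss : c ∈ missingColors H Δ ψ v) (hcab : c = a ∨ c = b) :
    ∀ w w', (chainGraph H ψ a b).Adj v w → (chainGraph H ψ a b).Adj v w' → w = w' := by
  intro w w' h h'
  by_contra hne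
  have hfw : s(v, w) ∈ H.edgeSet := (H.mem_edgeSet).mpr h.1
  have hfw' : s(v, w') ∈ H.edgeSet := (H.mem_edgeSet).mpr h'.1
  have hedne : s(v, w) ≠ s(v, w') :=
    fun hh => hne (sym2_mk_eq_right h.1.ne' hh)
  have hcol := hψ.2 _ hfw _ hfw' hedne ⟨v, Sym2.mem_mk_left v w, Sym2.mem_mk_left v w'⟩
  have h1 := hmiss.2.2 _ hfw (Sym2.mem_mk_left v w)
  have h2 := hmiss.2.2 _ hfw' (Sym2.mem_mk_left v w')
  rcases h.2 with e1 | e1 <;> rcases h'.2 with e2 | e2 <;> rcases hcab with rfl | rfl <;> omega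

lemma chain_max2 {H : SimpleGraph V} {Δ : ℕ} {ψ : Sym2 V → ℕ} {a b : ℕ}
    (hψ : IsEdgeColoring H Δ ψ) :
    ∀ u w1 w2 w3, (chainGraph H ψ a b).Adj u w1 → (chainGraph H ψ a b).Adj u w2 →
      (chainGraph H ψ a b).Adj u w3 → w1 = w2 ∨ w1 = w3 ∨ w2 = w3 := by
  intro u w1 w2 w3 h1 h2 h3
  by_contra hc
  push_neg at hc
  obtain ⟨n12, n13, n23⟩ := hc
  have hf1 : s(u, w1) ∈ H.edgeSet := (H.mem_edgeSet).mpr h1.1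
  have hf2 : s(u, w2) ∈ H.edgeSet := (H.mem_edgeSet).mpr h2.1
  have hf3 : s(u, w3) ∈ H.edgeSet := (H.mem_edgeSet).mpr h3.1
  have d12 := hψ.2 _ hf1 _ hf2 (fun hh => n12 (sym2_mk_eq_right h1.1.ne' hh))
    ⟨u, Sym2.mem_mk_left _ _, Sym2.mem_mk_left _ _⟩
  have d13 := hψ.2 _ hf1 _ hf3 (fun hh => n13 (sym2_mk_eq_right h1.1.ne' hh))
    ⟨u, Sym2.mem_mk_left _ _, Sym2.mem_mk_left _ _⟩
  have d23 := hψ.2 _ hf2 _ hf3 (fun hh => n23 (sym2_mk_eq_right h2.1.ne' hh))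
    ⟨u, Sym2.mem_mk_left _ _, Sym2.mem_mk_left _ _⟩
  rcases h1.2 with e1 | e1 <;> rcases h2.2 with e2 | e2 <;> rcases h3.2 with e3 | e3 <;> omega

lemma threeDeadEnds :
    ∀ (n : ℕ) (H : SimpleGraph V) (x y z : V),
      (∀ u w1 w2 w3, H.Adj u w1 → H.Adj u w2 → H.Adj u w3 → w1 = w2 ∨ w1 = w3 ∨ w2 = w3) →
      (∀ w1 w2, H.Adj x w1 → H.Adj x w2 → w1 = w2) →
      (∀ w1 w2, H.Adj y w1 → H.Adj y w2 → w1 = w2) →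
      (∀ w1 w2, H.Adj z w1 → H.Adj z w2 → w1 = w2) →
      x ≠ y → x ≠ z → y ≠ z →
      ∀ (p : H.Walk x y), p.IsPath → p.length ≤ n → H.Reachable x z → False := by
  intro n
  induction n with
  | zero =>
    intro H x y z _ _ _ _ hxy _ _ p _ hlen _
    cases p with
    | nil => exact hxy rfl
    | cons h q => simp at hlen
  | succ n IH =>
    intro H x y z hmax lx ly lz hxy hxz hyz p hp hlen hrz
    obtain ⟨q0⟩ := hrz
    obtain ⟨q, hq⟩ : ∃ q : H.Walk x z, q.IsPath := ⟨q0.toPath.1, q0.toPath.2⟩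
    cases p with
    | nil => exact hxy rfl
    | @cons _ wp _ hxwp p₂ =>
      cases q with
      | nil => exact hxz rfl
      | @cons _ wq _ hxwq q₂ =>
        obtain rfl : wp = wq := lx _ _ hxwp hxwq
        rw [SimpleGraph.Walk.cons_isPath_iff] at hp hq
        obtain ⟨hp₂, hxp₂⟩ := hp
        obtain ⟨hq₂, hxq₂⟩ := hq
        cases p₂ with
        | nil =>
          cases q₂ with
          | nil => exact hyz rfl
          | @cons _ u _ hwu q₃ =>
            have hux : u = x := ly _ _ hwu hxwp.symm
            apply hxq₂
            rw [SimpleGraph.Walk.support_cons]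
            exact List.mem_cons_of_mem _ (hux ▸ q₃.start_mem_support)
        | @cons _ u' _ hwu' p₃ =>
          cases q₂ with
          | nil =>
            have hux : u' = x := lz _ _ hwu' hxwp.symm
            apply hxp₂
            rw [SimpleGraph.Walk.support_cons]
            exact List.mem_cons_of_mem _ (hux ▸ p₃.start_mem_support)
          | @cons _ u _ hwu q₃ =>
            set H' := H.deleteEdges {f : Sym2 V | x ∈ f} with hH'
            have hH'adj : ∀ {c d : V}, H'.Adj c d → H.Adj c d ∧ x ∉ s(c, d) := by
              intro c d h
              rw [hH', SimpleGraph.deleteEdges_adj] at h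
              exact ⟨h.1, h.2⟩
            have htrans : ∀ {c d : V} (pp : H.Walk c d), x ∉ pp.support →
                ∀ f ∈ pp.edges, f ∈ H'.edgeSet := by
              intro c d pp hxpp f hf
              rw [hH', SimpleGraph.edgeSet_deleteEdges]
              refine ⟨pp.edges_subset_edgeSet hf, ?_⟩
              intro hxf
              exact hxpp (mem_support_of_mem_edges' pp hf hxf)
            have hwy : wp ≠ y := by
              rw [SimpleGraph.Walk.cons_isPath_iff] at hp₂
              intro hh
              exact hp₂.2 (hh ▸ p₃.end_mem_support)
            have hwz : wp ≠ z := by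
              rw [SimpleGraph.Walk.cons_isPath_iff] at hq₂
              intro hh
              exact hq₂.2 (hh ▸ q₃.end_mem_support)
            have hmax' : ∀ u0 w1 w2 w3, H'.Adj u0 w1 → H'.Adj u0 w2 → H'.Adj u0 w3 →
                w1 = w2 ∨ w1 = w3 ∨ w2 = w3 :=
              fun u0 w1 w2 w3 h1 h2 h3 =>
                hmax u0 w1 w2 w3 (hH'adj h1).1 (hH'adj h2).1 (hH'adj h3).1
            have lw' : ∀ w1 w2, H'.Adj wp w1 → H'.Adj wp w2 → w1 = w2 := by
              intro w1 w2 h1 h2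
              have hx1 : w1 ≠ x := by
                intro hh
                exact (hH'adj h1).2 (hh ▸ Sym2.mem_mk_right wp w1)
              have hx2 : w2 ≠ x := by
                intro hh
                exact (hH'adj h2).2 (hh ▸ Sym2.mem_mk_right wp w2)
              rcases hmax wp w1 w2 x (hH'adj h1).1 (hH'adj h2).1 hxwp.symm with h | h | h
              · exact h
              · exact absurd h hx1
              · exact absurd h hx2
            have ly' : ∀ w1 w2, H'.Adj y w1 → H'.Adj y w2 → w1 = w2 :=
              fun w1 w2 h1 h2 => ly w1 w2 (hH'adj h1).1 (hH'adj h2).1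
            have lz' : ∀ w1 w2, H'.Adj z w1 → H'.Adj z w2 → w1 = w2 :=
              fun w1 w2 h1 h2 => lz w1 w2 (hH'adj h1).1 (hH'adj h2).1
            refine IH H' wp y z hmax' lw' ly' lz' hwy hwz hyz
              ((SimpleGraph.Walk.cons hwu' p₃).transfer H' (htrans _ hxp₂)) ?_ ?_
              ⟨(SimpleGraph.Walk.cons hwu q₃).transfer H' (htrans _ hxq₂)⟩
            · rw [SimpleGraph.Walk.isPath_def, SimpleGraph.Walk.support_transfer]
              exact (SimpleGraph.Walk.isPath_def _).mp hp₂
            · rw [SimpleGraph.Walk.length_transfer]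
              simpa using hlen

/-- A "fan path": `s₁ = u₀, u₁, …, u_m`, distinct neighbors of `r`, with
`ψ(r u_{k+1})` missing at `u_k`. -/
structure FanPath (G : SimpleGraph V) (Δ : ℕ) (ψ : Sym2 V → ℕ) (r s₁ : V)
    (L : List V) : Prop where
  len_pos : 0 < L.length
  head : L[0]'len_pos = s₁
  nodup : L.Nodup
  adj : ∀ v ∈ L, G.Adj r v
  step : ∀ k, (h : k + 1 < L.length) → ψ (s(r, L[k+1]'h)) ∈
    missingColors (G.deleteEdges {s(r, s₁)}) Δ ψ (L[k]'(by omega))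

namespace FanPath

variable {G : SimpleGraph V} {Δ : ℕ} {ψ : Sym2 V → ℕ} {r s₁ : V} {L : List V}

lemma ne_r (hL : FanPath G Δ ψ r s₁ L) {v : V} (hv : v ∈ L) : v ≠ r :=
  (hL.adj v hv).ne'

lemma edge_mem (hL : FanPath G Δ ψ r s₁ L) {k : ℕ} (hk : k < L.length) (hk0 : k ≠ 0) :
    s(r, L[k]'hk) ∈ (G.deleteEdges {s(r, s₁)}).edgeSet := by
  rw [SimpleGraph.mem_edgeSet, SimpleGraph.deleteEdges_adj]
  refine ⟨hL.adj _ (L.getElem_mem hk), ?_⟩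
  rw [Set.mem_singleton_iff]
  intro hh
  have h0 : 0 < L.length := hL.len_pos
  have : L[k]'hk = s₁ := sym2_mk_eq_right (hL.ne_r (L.getElem_mem hk)) hh
  rw [← hL.head] at this
  exact hk0 ((hL.nodup.getElem_inj_iff).mp this)

lemma last_missing (hL : FanPath G Δ ψ r s₁ L) {v : V}
    (hv : L[L.length - 1]'(by have := hL.len_pos; omega) = v) {c : ℕ}
    (hc : c ∈ missingColors (G.deleteEdges {s(r, s₁)}) Δ ψ v) :
    c ∈ missingColors (G.deleteEdges {s(r, s₁)}) Δ ψ
      (L[L.length - 1]'(by have := hL.len_pos; omega)) := hv ▸ hc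

end FanPath

lemma fanPath_singleton {G : SimpleGraph V} {Δ : ℕ} {ψ : Sym2 V → ℕ} {r s₁ : V}
    (hadj : G.Adj r s₁) : FanPath G Δ ψ r s₁ [s₁] := by
  refine ⟨by simp, rfl, by simp, ?_, ?_⟩
  · intro v hv
    rw [List.mem_singleton] at hv
    exact hv ▸ hadj
  · intro k h
    simp at h

lemma fanPath_take_of {G : SimpleGraph V} {Δ : ℕ} {ψ : Sym2 V → ℕ} {r s₁ : V} {L : List V}
    (hL : FanPath G Δ ψ r s₁ L) (ψ₂ : Sym2 V → ℕ) {m : ℕ} (hm : m < L.length)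
    (hsteps : ∀ k, (h : k + 1 < L.length) → k < m → ψ₂ (s(r, L[k+1]'h)) ∈
      missingColors (G.deleteEdges {s(r, s₁)}) Δ ψ₂ (L[k]'(by omega))) :
    FanPath G Δ ψ₂ r s₁ (L.take (m+1)) := by
  have hlen : (L.take (m+1)).length = m + 1 := by
    rw [List.length_take]
    omega
  refine ⟨by omega, ?_, hL.nodup.sublist (List.take_sublist _ _), ?_, ?_⟩
  · rw [List.getElem_take]
    exact hL.head
  · exact fun v hv => hL.adj v (List.mem_of_mem_take hv)
  · intro k h
    have hk : k < m := by omega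
    have h' : k + 1 < L.length := by omega
    simp only [List.getElem_take]
    exact hsteps k h' hk

lemma fanPath_take {G : SimpleGraph V} {Δ : ℕ} {ψ : Sym2 V → ℕ} {r s₁ : V} {L : List V}
    (hL : FanPath G Δ ψ r s₁ L) {m : ℕ} (hm : m < L.length) :
    FanPath G Δ ψ r s₁ (L.take (m+1)) :=
  fanPath_take_of hL ψ hm (fun k h _ => hL.step k h)

lemma take_last {L : List V} {m : ℕ} (hm : m < L.length) (h' : 0 < (L.take (m+1)).length) :
    (L.take (m+1))[(L.take (m+1)).length - 1]'(by omega) = L[m]'hm := by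
  have hlen : (L.take (m+1)).length = m + 1 := by
    rw [List.length_take]; omega
  have : (L.take (m+1)).length - 1 = m := by omega
  simp only [List.getElem_take]
  congr 1

lemma fanPath_snoc {G : SimpleGraph V} {Δ : ℕ} {ψ : Sym2 V → ℕ} {r s₁ : V} {L : List V}
    (hL : FanPath G Δ ψ r s₁ L) {x : V} (hadjx : G.Adj r x) (hx : x ∉ L)
    (hstep : ψ (s(r, x)) ∈ missingColors (G.deleteEdges {s(r, s₁)}) Δ ψ
      (L[L.length - 1]'(by have := hL.len_pos; omega))) :
    FanPath G Δ ψ r s₁ (L ++ [x]) := by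
  have h0 : 0 < L.length := hL.len_pos
  refine ⟨by simp, ?_, ?_, ?_, ?_⟩
  · rw [List.getElem_append_left h0]
    exact hL.head
  · rw [List.nodup_append]
    exact ⟨hL.nodup, List.nodup_singleton x, by simp; intro a ha hax; exact hx (hax ▸ ha)⟩
  · intro v hv
    rcases List.mem_append.mp hv with h | h
    · exact hL.adj v h
    · rw [List.mem_singleton] at h
      exact h ▸ hadjx
  · intro k hk
    rw [List.length_append, List.length_singleton] at hk
    by_cases hklt : k + 1 < L.length
    · have hkk : k < L.length := by omega
      simp only [List.getElem_append_left hklt, List.getElem_append_left hkk]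
      exact hL.step k hklt
    · have hke : k + 1 = L.length := by omega
      have h1 : (L ++ [x])[k+1]'(by rw [List.length_append, List.length_singleton]; omega) = x :=
        List.getElem_concat_length hke _
      have h2 : (L ++ [x])[k]'(by rw [List.length_append, List.length_singleton]; omega)
          = L[k]'(by omega) := List.getElem_append_left (by omega)
      rw [h1, h2]
      have : L[k]'(by omega) = L[L.length - 1]'(by omega) := by congr 1; omega
      rw [this]
      exact hstep

lemma exists_missing_r [Fintype V] {G : SimpleGraph V} [DecidableRel G.Adj] {Δ : ℕ}
    {r s₁ : V} (hΔ : G.maxDegree = Δ) (hadj : G.Adj r s₁) (ψ : Sym2 V → ℕ) :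
    ∃ γ, γ ∈ missingColors (G.deleteEdges {s(r, s₁)}) Δ ψ r := by
  classical
  set P : Finset ℕ := ((G.neighborFinset r).erase s₁).image (fun w => ψ (s(r, w)))
    with hP
  have hdeg : G.degree r ≤ Δ := hΔ ▸ G.degree_le_maxDegree r
  have hdegpos : 0 < G.degree r := G.degree_pos_iff_exists_adj r |>.mpr ⟨s₁, hadj⟩
  have hcard : P.card ≤ Δ - 1 := by
    refine le_trans Finset.card_image_le ?_
    rw [Finset.card_erase_of_mem ((G.mem_neighborFinset r s₁).mpr hadj)]
    rw [G.card_neighborFinset_eq_degree]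
    omega
  have hex : ∃ γ ∈ Finset.Icc 1 Δ, γ ∉ P := by
    by_contra hcon
    push_neg at hcon
    have hsub : Finset.Icc 1 Δ ⊆ P := fun γ hγ => hcon γ hγ
    have := Finset.card_le_card hsub
    rw [Nat.card_Icc] at this
    omega
  obtain ⟨γ, hγI, hγP⟩ := hex
  rw [Finset.mem_Icc] at hγI
  refine ⟨γ, hγI.1, hγI.2, ?_⟩
  intro f hf hrf hc
  obtain ⟨w, rfl, hadjw⟩ := edge_decomp hf hrf
  rw [SimpleGraph.deleteEdges_adj] at hadjw
  have hws : w ≠ s₁ := by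
    intro hh
    exact hadjw.2 (by rw [hh]; exact Set.mem_singleton _)
  apply hγP
  rw [hP]
  exact Finset.mem_image.mpr ⟨w, Finset.mem_erase.mpr
    ⟨hws, (G.mem_neighborFinset r w).mpr hadjw.1⟩, hc⟩

/-- The fan-shift recoloring: if a fan path ends at a vertex sharing a missing color
with `r`, then `G` itself is `Δ`-edge-colorable, contradiction. -/
lemma fan_shift {G : SimpleGraph V} {Δ : ℕ} {ψ : Sym2 V → ℕ} {r s₁ : V}
    (hψ : IsEdgeColoring (G.deleteEdges {s(r, s₁)}) Δ ψ)
    (hnoext : ¬ ∃ c, IsEdgeColoring G Δ c)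
    {L : List V} (hL : FanPath G Δ ψ r s₁ L) {γ : ℕ}
    (hγr : γ ∈ missingColors (G.deleteEdges {s(r, s₁)}) Δ ψ r)
    (hγl : γ ∈ missingColors (G.deleteEdges {s(r, s₁)}) Δ ψ
      (L[L.length - 1]'(by have := hL.len_pos; omega))) : False := by
  classical
  apply hnoext
  set Gd := G.deleteEdges {s(r, s₁)} with hGd
  have h0 : 0 < L.length := hL.len_pos
  set cf : Sym2 V → ℕ := fun f =>
    if h : ∃ k, ∃ (hk : k < L.length), f = s(r, L[k]'hk) then
      (if Classical.choose h + 1 < L.length then ψ (s(r, L.getD (Classical.choose h + 1) r)) else γ)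
    else ψ f with hcf
  have keyA : ∀ j (hj : j < L.length), cf (s(r, L[j]'hj)) =
      if j + 1 < L.length then ψ (s(r, L.getD (j + 1) r)) else γ := by
    intro j hj
    have hex : ∃ k, ∃ (hk : k < L.length), s(r, L[j]'hj) = s(r, L[k]'hk) :=
      ⟨j, hj, rfl⟩
    rw [hcf]
    simp only [dif_pos hex]
    obtain ⟨hk, hfk⟩ := Classical.choose_spec hex
    have hLeq : L[j]'hj = L[Classical.choose hex]'hk :=
      sym2_mk_eq_right (hL.ne_r (L.getElem_mem hj)) hfk
    have hkj : Classical.choose hex = j := ((hL.nodup.getElem_inj_iff).mp hLeq).symm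
    rw [hkj]
  have keyB : ∀ f, (∀ k (hk : k < L.length), f ≠ s(r, L[k]'hk)) → cf f = ψ f := by
    intro f hf
    have hnex : ¬∃ k, ∃ (hk : k < L.length), f = s(r, L[k]'hk) := by
      rintro ⟨k, hk, he⟩
      exact hf k hk he
    rw [hcf]
    simp only [dif_neg hnex]
  -- colors assigned to fan edges are "missing at the previous vertex" / in range
  have hedge : ∀ k (hk : k < L.length), k ≠ 0 → s(r, L[k]'hk) ∈ Gd.edgeSet :=
    fun k hk hk0 => hL.edge_mem hk hk0
  have hmissval : ∀ j (hj : j < L.length),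
      cf (s(r, L[j]'hj)) ∈ missingColors Gd Δ ψ (L[j]'hj) := by
    intro j hj
    rw [keyA j hj]
    by_cases hlt : j + 1 < L.length
    · rw [if_pos hlt, List.getD_eq_getElem L r hlt]
      exact hL.step j hlt
    · rw [if_neg hlt]
      have : L[j]'hj = L[L.length - 1]'(by omega) := by congr 1; omega
      rw [this]
      exact hγl
  have hrange : ∀ j (hj : j < L.length),
      1 ≤ cf (s(r, L[j]'hj)) ∧ cf (s(r, L[j]'hj)) ≤ Δ := by
    intro j hj
    have := hmissval j hj
    exact ⟨this.1, this.2.1⟩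
  have hGdsub : ∀ {f : Sym2 V}, f ∈ G.edgeSet → (∀ k (hk : k < L.length),
      f ≠ s(r, L[k]'hk)) → f ∈ Gd.edgeSet := by
    intro f hf hnf
    rw [hGd, SimpleGraph.edgeSet_deleteEdges]
    refine ⟨hf, ?_⟩
    rw [Set.mem_singleton_iff]
    intro hh
    exact hnf 0 h0 (by rw [hL.head]; exact hh)
  -- the asymmetric "one matched, one unmatched" case
  have onematch : ∀ (j : ℕ) (hj : j < L.length) (g : Sym2 V), g ∈ G.edgeSet →
      (∀ k (hk : k < L.length), g ≠ s(r, L[k]'hk)) →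
      (∃ v, v ∈ s(r, L[j]'hj) ∧ v ∈ g) →
      cf (s(r, L[j]'hj)) ≠ cf g := by
    intro j hj g hg hnotg hshare
    have hgGd : g ∈ Gd.edgeSet := hGdsub hg hnotg
    rw [keyB g hnotg]
    by_cases hrg : r ∈ g
    · -- share r; compare as edges at r
      by_cases hlt : j + 1 < L.length
      · rw [keyA j hj, if_pos hlt, List.getD_eq_getElem L r hlt]
        intro hh
        exact hψ.2 _ (hedge (j+1) hlt (by omega)) _ hgGd
          (fun he => hnotg (j+1) hlt he.symm) ⟨r, Sym2.mem_mk_left _ _, hrg⟩ hh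
      · rw [keyA j hj, if_neg hlt]
        intro hh
        exact hγr.2.2 g hgGd hrg hh.symm
    · -- share L[j]
      obtain ⟨v, hv1, hv2⟩ := hshare
      rw [Sym2.mem_iff] at hv1
      have hvL : v = L[j]'hj := by
        rcases hv1 with rfl | h
        · exact absurd hv2 hrg
        · exact h
      intro hh
      exact (hmissval j hj).2.2 g hgGd (hvL ▸ hv2) hh.symm
  refine ⟨cf, ?_, ?_⟩
  · -- range
    intro f hf
    by_cases hmatch : ∃ k, ∃ (hk : k < L.length), f = s(r, L[k]'hk)
    · obtain ⟨k, hk, rfl⟩ := hmatch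
      exact hrange k hk
    · push_neg at hmatch
      rw [keyB f (fun k hk => hmatch k hk)]
      exact hψ.1 f (hGdsub hf (fun k hk => hmatch k hk))
  · -- properness
    intro f hf g hg hne hshare
    by_cases hmf : ∃ k, ∃ (hk : k < L.length), f = s(r, L[k]'hk)
    · obtain ⟨k, hk, rfl⟩ := hmf
      by_cases hmg : ∃ k', ∃ (hk' : k' < L.length), g = s(r, L[k']'hk')
      · obtain ⟨k', hk', rfl⟩ := hmg
        have hkk' : k ≠ k' := by
          intro hh
          apply hne
          subst hh
          rfl
        rw [keyA k hk, keyA k' hk']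
        by_cases h1 : k + 1 < L.length <;> by_cases h2 : k' + 1 < L.length
        · rw [if_pos h1, if_pos h2, List.getD_eq_getElem L r h1, List.getD_eq_getElem L r h2]
          refine hψ.2 _ (hedge (k+1) h1 (by omega)) _ (hedge (k'+1) h2 (by omega)) ?_
            ⟨r, Sym2.mem_mk_left _ _, Sym2.mem_mk_left _ _⟩
          intro hh
          have hLq := sym2_mk_eq_right (hL.ne_r (L.getElem_mem h1)) hh
          have := (hL.nodup.getElem_inj_iff).mp hLq
          omega
        · rw [if_pos h1, if_neg h2, List.getD_eq_getElem L r h1]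
          exact hγr.2.2 _ (hedge (k+1) h1 (by omega)) (Sym2.mem_mk_left _ _)
        · rw [if_neg h1, if_pos h2, List.getD_eq_getElem L r h2]
          intro hh
          exact hγr.2.2 _ (hedge (k'+1) h2 (by omega)) (Sym2.mem_mk_left _ _) hh.symm
        · exfalso
          apply hkk'
          omega
      · push_neg at hmg
        exact onematch k hk g hg (fun k' hk' => hmg k' hk') hshare
    · push_neg at hmf
      by_cases hmg : ∃ k', ∃ (hk' : k' < L.length), g = s(r, L[k']'hk')
      · obtain ⟨k', hk', rfl⟩ := hmg
        obtain ⟨v, hv1, hv2⟩ := hshare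
        exact (onematch k' hk' f hf (fun k hk => hmf k hk) ⟨v, hv2, hv1⟩).symm
      · push_neg at hmg
        rw [keyB f (fun k hk => hmf k hk), keyB g (fun k hk => hmg k hk)]
        exact hψ.2 f (hGdsub hf (fun k hk => hmf k hk)) g
          (hGdsub hg (fun k hk => hmg k hk)) hne hshare

lemma no_common [Fintype V] {G : SimpleGraph V} [DecidableRel G.Adj] {Δ : ℕ} {r s₁ : V}
    (hΔ : G.maxDegree = Δ) (hadj : G.Adj r s₁)
    (hnoext : ¬ ∃ c, IsEdgeColoring G Δ c)
    {ψ : Sym2 V → ℕ} (hψ : IsEdgeColoring (G.deleteEdges {s(r, s₁)}) Δ ψ)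
    {Lv Lw : List V} (hLv : FanPath G Δ ψ r s₁ Lv) (hLw : FanPath G Δ ψ r s₁ Lw)
    {v w : V}
    (hvl : Lv[Lv.length - 1]'(by have := hLv.len_pos; omega) = v)
    (hwl : Lw[Lw.length - 1]'(by have := hLw.len_pos; omega) = w)
    (hvw : v ≠ w) (d : ℕ)
    (hd : d ∈ missingColors (G.deleteEdges {s(r, s₁)}) Δ ψ v)
    (hd' : d ∈ missingColors (G.deleteEdges {s(r, s₁)}) Δ ψ w) : False := by
  classical
  set Gd := G.deleteEdges {s(r, s₁)} with hGddef
  obtain ⟨γ, hγ⟩ := exists_missing_r hΔ hadj ψ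
  by_cases hγd : γ = d
  · subst hγd
    exact fan_shift hψ hnoext hLv hγ (hLv.last_missing hvl hd)
  set CG := chainGraph Gd ψ γ d with hCGdef
  have hγrg : 1 ≤ γ ∧ γ ≤ Δ := ⟨hγ.1, hγ.2.1⟩
  have hdrg : 1 ≤ d ∧ d ≤ Δ := ⟨hd.1, hd.2.1⟩
  have key : ∀ (Lz : List V) (hLz : FanPath G Δ ψ r s₁ Lz) (z : V),
      Lz[Lz.length - 1]'(by have := hLz.len_pos; omega) = z →
      d ∈ missingColors Gd Δ ψ z → ¬ CG.Reachable z r → False := by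
    intro Lz hLz z hzl hdz hnr
    obtain ⟨ψ', hψ'def⟩ : ∃ ψ'', ψ'' = swapC Gd ψ γ d z := ⟨_, rfl⟩
    have hψ'p : IsEdgeColoring Gd Δ ψ' := by
      rw [hψ'def]; exact swapC_proper hψ hγrg hdrg
    have hmnr : ∀ {v0 : V}, ¬ (chainGraph Gd ψ γ d).Reachable z v0 →
        missingColors Gd Δ ψ' v0 = missingColors Gd Δ ψ v0 := by
      intro v0 h
      rw [hψ'def]
      exact swapC_missing_of_not_reach Gd Δ h
    have hmr : ∀ {v0 : V} {c : ℕ}, (chainGraph Gd ψ γ d).Reachable z v0 →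
        (c ∈ missingColors Gd Δ ψ' v0 ↔ csw γ d c ∈ missingColors Gd Δ ψ v0) := by
      intro v0 c h
      rw [hψ'def]
      exact swapC_missing_of_reach Gd Δ hγrg hdrg h
    have hγz' : γ ∈ missingColors Gd Δ ψ' z := by
      rw [hmr (SimpleGraph.Reachable.refl z), csw_left]
      exact hdz
    have hγr' : γ ∈ missingColors Gd Δ ψ' r := by
      rw [hmnr hnr]
      exact hγ
    have hpres : ∀ k (hk : k < Lz.length), k ≠ 0 →
        ψ' (s(r, Lz[k]'hk)) = ψ (s(r, Lz[k]'hk)) := fun k hk hk0 => by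
      rw [hψ'def]; exact swapC_eq_of_not_reach (hLz.edge_mem hk hk0) (Sym2.mem_mk_left _ _) hnr
    by_cases hB : ∀ k, (h : k + 1 < Lz.length) → ψ' (s(r, Lz[k+1]'h)) ∈
        missingColors Gd Δ ψ' (Lz[k]'(by omega))
    · exact fan_shift hψ'p hnoext ⟨hLz.len_pos, hLz.head, hLz.nodup, hLz.adj, hB⟩ hγr'
        ((FanPath.mk hLz.len_pos hLz.head hLz.nodup hLz.adj hB).last_missing hzl hγz')
    · push_neg at hB
      have hk₀lt : Nat.find hB + 1 < Lz.length := (Nat.find_spec hB).1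
      have hk₀bad := (Nat.find_spec hB).2
      have hmin : ∀ k', k' < Nat.find hB → (h : k' + 1 < Lz.length) →
          ψ' (s(r, Lz[k'+1]'h)) ∈ missingColors Gd Δ ψ' (Lz[k']'(by omega)) := by
        intro k' hk' h
        by_contra hcon
        exact Nat.find_min hB hk' ⟨h, hcon⟩
      have hstep := hLz.step (Nat.find hB) hk₀lt
      have hpres1 := hpres (Nat.find hB + 1) hk₀lt (by omega)
      have hreach : CG.Reachable z (Lz[Nat.find hB]'(by omega)) := by
        by_contra hnr2
        apply hk₀bad
        rw [hpres1, hmnr hnr2]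
        exact hstep
      have hcγ : ψ (s(r, Lz[Nat.find hB + 1]'hk₀lt)) ≠ γ :=
        fun hh => hγ.2.2 _ (hLz.edge_mem hk₀lt (by omega)) (Sym2.mem_mk_left _ _) hh
      by_cases hcd : ψ (s(r, Lz[Nat.find hB + 1]'hk₀lt)) = d
      · have hγk₀ : γ ∈ missingColors Gd Δ ψ' (Lz[Nat.find hB]'(by omega)) := by
          rw [hmr hreach, csw_left, ← hcd]
          exact hstep
        have hpre : FanPath G Δ ψ' r s₁ (Lz.take (Nat.find hB + 1)) :=
          fanPath_take_of hLz ψ' (by omega) (fun k h hk => hmin k hk h)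
        refine fan_shift hψ'p hnoext hpre hγr' ?_
        exact hpre.last_missing (take_last (by omega) (by rw [List.length_take]; omega)) hγk₀
      · apply hk₀bad
        rw [hpres1, hmr hreach, csw_of_ne hcγ hcd]
        exact hstep
  have hvr : v ≠ r := hvl ▸ hLv.ne_r (Lv.getElem_mem _)
  have hwr : w ≠ r := hwl ▸ hLw.ne_r (Lw.getElem_mem _)
  by_cases h1 : CG.Reachable r v
  · by_cases h2 : CG.Reachable r w
    · obtain ⟨p0⟩ := h1.symm.trans h2
      exact threeDeadEnds p0.toPath.1.length CG v w r (chain_max2 hψ)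
        (chain_leaf hψ hd (Or.inr rfl)) (chain_leaf hψ hd' (Or.inr rfl))
        (chain_leaf hψ hγ (Or.inl rfl)) hvw hvr hwr p0.toPath.1 p0.toPath.2 le_rfl h1.symm
    · exact key Lw hLw w hwl hd' (fun hh => h2 hh.symm)
  · exact key Lv hLv v hvl hd (fun hh => h1 hh.symm)

lemma multifan_path {G : SimpleGraph V} {Δ : ℕ} {φ : Sym2 V → ℕ} {r s₁ : V} {sl : List V}
    (hF : IsMultifan G Δ φ r sl) (hs₁ : ∀ (h : 0 < sl.length), sl[0]'h = s₁) :
    ∀ t, ∀ (ht : t < sl.length), ∃ L, ∃ (hL : FanPath G Δ φ r s₁ L),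
      (L[L.length - 1]'(by have := hL.len_pos; omega) = sl[t]'ht) ∧
      (∀ u ∈ L, ∃ l, ∃ (hl : l < sl.length), l ≤ t ∧ u = sl[l]'hl) := by
  have hslnd : sl.Nodup := (List.nodup_cons.mp hF.nodup).2
  intro t
  induction t using Nat.strong_induction_on with
  | _ t IH =>
    intro ht
    by_cases ht0 : t = 0
    · subst ht0
      have hadj : G.Adj r s₁ := by
        have := hF.adj 0 ht
        rwa [hs₁ ht] at this
      refine ⟨[s₁], fanPath_singleton hadj, by simpa using (hs₁ ht).symm, ?_⟩
      intro u hu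
      rw [List.mem_singleton] at hu
      exact ⟨0, ht, by omega, by rw [hu, hs₁ ht]⟩
    · obtain ⟨l0, hl0t, hl0⟩ := hF.color t ht (by omega)
      obtain ⟨L, hL, hlast, hmem⟩ := IH l0 hl0t (by omega)
      have hnotin : sl[t]'ht ∉ L := by
        intro hu
        obtain ⟨l, hl, hllt, heq⟩ := hmem _ hu
        have := (hslnd.getElem_inj_iff).mp heq.symm
        omega
      have hstep : φ (s(r, sl[t]'ht)) ∈
          missingColors (G.deleteEdges {s(r, s₁)}) Δ φ
            (L[L.length - 1]'(by have := hL.len_pos; omega)) := by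
        rw [hlast]
        have h0 : 0 < sl.length := by omega
        have hrw : (G.deleteEdges {s(r, sl[0]'h0)}) =
            (G.deleteEdges {s(r, s₁)}) := by rw [hs₁ h0]
        rw [← hrw]
        exact hl0
      refine ⟨L ++ [sl[t]'ht], fanPath_snoc hL (hF.adj t ht) hnotin hstep, ?_, ?_⟩
      · have hlen : (L ++ [sl[t]'ht]).length - 1 = L.length := by simp
        exact List.getElem_concat_length hlen _
      · intro u hu
        rcases List.mem_append.mp hu with h | h
        · obtain ⟨l, hl, hllt, heq⟩ := hmem _ h
          exact ⟨l, hl, by omega, heq⟩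
        · rw [List.mem_singleton] at h
          exact ⟨t, ht, le_refl _, h⟩

lemma alphaSeq_path {G : SimpleGraph V} {Δ : ℕ} {φ : Sym2 V → ℕ} {r s₁ : V} {sl : List V}
    {α : ℕ} {T : List V}
    (hA : IsAlphaSeq (G.deleteEdges {s(r, s₁)}) Δ φ r s₁ sl α T)
    (hadj1 : G.Adj r s₁) (hadjsl : ∀ v ∈ sl, G.Adj r v) (hTnd : T.Nodup) :
    ∀ m, ∀ (hm : m < T.length), ∃ L, ∃ (hL : FanPath G Δ φ r s₁ L),
      (L[L.length - 1]'(by have := hL.len_pos; omega) = T[m]'hm) ∧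
      (∀ u ∈ L, u = s₁ ∨ ∃ l, ∃ (hl : l < T.length), l ≤ m ∧ u = T[l]'hl) := by
  intro m
  induction m with
  | zero =>
    intro hm
    by_cases h : T[0]'hm = s₁
    · refine ⟨[s₁], fanPath_singleton hadj1, by simpa using h.symm, ?_⟩
      intro u hu
      rw [List.mem_singleton] at hu
      exact Or.inl hu
    · have hadjT : G.Adj r (T[0]'hm) := hadjsl _ (hA.sub.subset (T.getElem_mem hm))
      refine ⟨[s₁, T[0]'hm], ?_, by simp, ?_⟩
      · refine ⟨by simp, rfl, by simp [Ne.symm h], ?_, ?_⟩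
        · intro u hu
          rcases List.mem_cons.mp hu with rfl | hu
          · exact hadj1
          · rw [List.mem_singleton] at hu
            exact hu ▸ hadjT
        · intro k hk
          simp only [List.length_cons, List.length_nil] at hk
          have hk0 : k = 0 := by omega
          subst hk0
          have hhead : T.head hA.ne = T[0]'hm := List.head_eq_getElem hA.ne
          show φ (s(r, T[0]'hm)) ∈ _
          rw [← hhead, hA.color_first]
          exact hA.alpha_missing
      · intro u hu
        rcases List.mem_cons.mp hu with rfl | hu
        · exact Or.inl rfl
        · rw [List.mem_singleton] at hu
          exact Or.inr ⟨0, hm, le_refl _, hu⟩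
  | succ m IH =>
    intro hm
    by_cases h : T[m+1]'hm = s₁
    · refine ⟨[s₁], fanPath_singleton hadj1, by simpa using h.symm, ?_⟩
      intro u hu
      rw [List.mem_singleton] at hu
      exact Or.inl hu
    · obtain ⟨L, hL, hlast, hmem⟩ := IH (by omega)
      have hnotin : T[m+1]'hm ∉ L := by
        intro hu
        rcases hmem _ hu with heq | ⟨l, hl, hlm, heq⟩
        · exact h heq
        · have := (hTnd.getElem_inj_iff).mp heq.symm
          omega
      have hstep : φ (s(r, T[m+1]'hm)) ∈
          missingColors (G.deleteEdges {s(r, s₁)}) Δ φ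
            (L[L.length - 1]'(by have := hL.len_pos; omega)) := by
        rw [hlast]
        exact hA.chain m hm
      refine ⟨L ++ [T[m+1]'hm],
        fanPath_snoc hL (hadjsl _ (hA.sub.subset (T.getElem_mem hm))) hnotin hstep, ?_, ?_⟩
      · have hlen : (L ++ [T[m+1]'hm]).length - 1 = L.length := by simp
        exact List.getElem_concat_length hlen _
      · intro u hu
        rcases List.mem_append.mp hu with hh | hh
        · rcases hmem _ hh with heq | ⟨l, hl, hlm, heq⟩
          · exact Or.inl heq
          · exact Or.inr ⟨l, hl, by omega, heq⟩
        · rw [List.mem_singleton] at hh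
          exact Or.inr ⟨m+1, hm, le_refl _, hh⟩

end Machinery

/-- Let `G` be Class 2 with maximum degree `Δ` and `F = F_φ(r, s₁:s_p)`
a multifan with respect to a critical edge `e = r s₁` and `φ ∈ C^Δ(G-e)`. Let
`δ ∈ φ̄(s_i)` and `λ ∈ φ̄(s_j)` with `i ≠ j`. If `δ` and `λ` are induced by the same
color `α ∈ φ̄(s₁)`, `δ ≺ λ`, and `s_i` and `s_j` are `(δ,λ)`-unlinked with respect to
`φ`, then `r` lies on the `(δ,λ)`-chain containing `s_j`. -/
theorem multifan_same_induced_unlinked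
    {V : Type*} [Fintype V] [DecidableEq V]
    (Δ : ℕ) (G : SimpleGraph V) [DecidableRel G.Adj]
    (hΔ : G.maxDegree = Δ) (hclass2 : chromIndex G = Δ + 1)
    (r s₁ : V) (rest : List V)
    (hcrit : IsCriticalEdge G (s(r, s₁)))
    (φ : Sym2 V → ℕ)
    (hφ : IsEdgeColoring (G.deleteEdges {s(r, s₁)}) Δ φ)
    (hF : IsMultifan G Δ φ r (s₁ :: rest))
    (i j : ℕ) (hi : i < (s₁ :: rest).length) (hj : j < (s₁ :: rest).length) (hij : i ≠ j)
    (δ lam : ℕ)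
    (hδ : δ ∈ missingColors (G.deleteEdges {s(r, s₁)}) Δ φ ((s₁ :: rest)[i]'hi))
    (hlam : lam ∈ missingColors (G.deleteEdges {s(r, s₁)}) Δ φ ((s₁ :: rest)[j]'hj))
    (α : ℕ) (hα : α ∈ missingColors (G.deleteEdges {s(r, s₁)}) Δ φ s₁)
    (hind₁ : InducedBy (G.deleteEdges {s(r, s₁)}) Δ φ r s₁ (s₁ :: rest) δ α)
    (hind₂ : InducedBy (G.deleteEdges {s(r, s₁)}) Δ φ r s₁ (s₁ :: rest) lam α)
    (hprec : PrecColor (G.deleteEdges {s(r, s₁)}) Δ φ r s₁ (s₁ :: rest) α δ lam)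
    (hunlinked : ¬ Linked (G.deleteEdges {s(r, s₁)}) φ δ lam
      ((s₁ :: rest)[i]'hi) ((s₁ :: rest)[j]'hj)) :
    Linked (G.deleteEdges {s(r, s₁)}) φ δ lam r ((s₁ :: rest)[j]'hj) := by
  classical
  by_contra hr
  have hGadj : G.Adj r s₁ := by
    have := hcrit.1
    rwa [SimpleGraph.mem_edgeSet] at this
  have hnoext : ¬ ∃ c, IsEdgeColoring G Δ c := by
    rintro ⟨c, hc⟩
    have hle : chromIndex G ≤ Δ := Nat.sInf_le ⟨c, hc⟩
    omega
  have hslnd : (s₁ :: rest).Nodup := (List.nodup_cons.mp hF.nodup).2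
  have hs₁nr : s₁ ∉ rest := (List.nodup_cons.mp hslnd).1
  have hij' : (s₁ :: rest)[i]'hi ≠ (s₁ :: rest)[j]'hj :=
    fun h => hij ((hslnd.getElem_inj_iff).mp h)
  have hadjsl : ∀ v ∈ (s₁ :: rest), G.Adj r v := by
    intro v hv
    obtain ⟨l, hl, rfl⟩ := List.mem_iff_getElem.mp hv
    exact hF.adj l hl
  obtain ⟨Pi0, hPi0, hPi0last, -⟩ := multifan_path hF (fun _ => rfl) i hi
  obtain ⟨Pj, hPj, hPjlast, -⟩ := multifan_path hF (fun _ => rfl) j hj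
  have hδrg : 1 ≤ δ ∧ δ ≤ Δ := ⟨hδ.1, hδ.2.1⟩
  have hlamrg : 1 ≤ lam ∧ lam ≤ Δ := ⟨hlam.1, hlam.2.1⟩
  -- the two colors are distinct
  have hdlam : δ ≠ lam := by
    intro h
    exact no_common hΔ hGadj hnoext hφ hPi0 hPj hPi0last hPjlast hij' δ hδ (h.symm ▸ hlam)
  -- construct a fan path to s_i avoiding s_j
  obtain ⟨Pi, hPi, hPilast, hPisupp⟩ :
      ∃ Pi, ∃ (hPi : FanPath G Δ φ r s₁ Pi),
        (Pi[Pi.length - 1]'(by have := hPi.len_pos; omega) = (s₁ :: rest)[i]'hi) ∧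
        ∀ u ∈ Pi, u ≠ (s₁ :: rest)[j]'hj := by
    rcases hprec with ⟨hδα, hlamnα, hind⟩ | ⟨T, hT, i₀, j₀, hi₀, hj₀, hij₀, hδT, hlamT⟩
    · -- case δ = α : then s_i = s₁
      have hsi : (s₁ :: rest)[i]'hi = s₁ := by
        by_contra hne
        exact no_common hΔ hGadj hnoext hφ hPi0 (fanPath_singleton hGadj) hPi0last rfl hne δ
          hδ (hδα.symm ▸ hα)
      refine ⟨[s₁], fanPath_singleton hGadj, by simpa using hsi.symm, ?_⟩
      intro u hu
      rw [List.mem_singleton] at hu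
      intro hh
      exact hij' (hsi.trans (hu ▸ hh))
    · -- case: an α-sequence witnesses δ ≺ lam
      have hTnd : T.Nodup := hT.sub.nodup hslnd
      have hTpaths := alphaSeq_path hT hGadj hadjsl hTnd
      obtain ⟨L1, hL1, hL1last, hL1mem⟩ := hTpaths i₀ hi₀
      obtain ⟨L2, hL2, hL2last, -⟩ := hTpaths j₀ hj₀
      have hTi : T[i₀]'hi₀ = (s₁ :: rest)[i]'hi := by
        by_contra hne
        exact no_common hΔ hGadj hnoext hφ hL1 hPi0 hL1last hPi0last hne δ
          (hL1last ▸ hδT) hδ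
      have hTj : T[j₀]'hj₀ = (s₁ :: rest)[j]'hj := by
        by_contra hne
        exact no_common hΔ hGadj hnoext hφ hL2 hPj hL2last hPjlast hne lam
          (hL2last ▸ hlamT) hlam
      have hsj1 : (s₁ :: rest)[j]'hj ≠ s₁ := by
        rw [← hTj]
        intro hTj0
        obtain ⟨j₁, rfl⟩ : ∃ j₁, j₀ = j₁ + 1 := ⟨j₀ - 1, by omega⟩
        rcases List.sublist_cons_iff.mp hT.sub with hsub | ⟨T', hTe, hsub⟩
        · exact hs₁nr (hsub.subset (hTj0 ▸ T.getElem_mem hj₀))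
        · subst hTe
          apply hs₁nr
          apply hsub.subset
          have : (s₁ :: T')[j₁ + 1]'hj₀ = T'[j₁]'(by
            have := hj₀; simpa using this) := List.getElem_cons_succ ..
          rw [this] at hTj0
          exact hTj0 ▸ T'.getElem_mem _
      refine ⟨L1, hL1, by rw [hL1last, hTi], ?_⟩
      intro u hu
      rcases hL1mem u hu with rfl | ⟨l, hl, hlm, rfl⟩
      · exact fun hh => hsj1 hh.symm
      · rw [← hTj]
        intro heq
        have := (hTnd.getElem_inj_iff).mp heq
        omega
  -- Kempe swap on the (δ,lam)-chain containing s_j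
  obtain ⟨φ₁, hφ₁def⟩ : ∃ φ₁',
      φ₁' = swapC (G.deleteEdges {s(r, s₁)}) φ δ lam ((s₁ :: rest)[j]'hj) := ⟨_, rfl⟩
  have hRr : ¬ (chainGraph (G.deleteEdges {s(r, s₁)}) φ δ lam).Reachable
      ((s₁ :: rest)[j]'hj) r := fun h => hr h.symm
  have hRi : ¬ (chainGraph (G.deleteEdges {s(r, s₁)}) φ δ lam).Reachable
      ((s₁ :: rest)[j]'hj) ((s₁ :: rest)[i]'hi) := fun h => hunlinked h.symm
  have hφ₁p : IsEdgeColoring (G.deleteEdges {s(r, s₁)}) Δ φ₁ := by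
    rw [hφ₁def]
    exact swapC_proper hφ hδrg hlamrg
  have hmnr : ∀ {v0 : V}, ¬ (chainGraph (G.deleteEdges {s(r, s₁)}) φ δ lam).Reachable
      ((s₁ :: rest)[j]'hj) v0 →
      missingColors (G.deleteEdges {s(r, s₁)}) Δ φ₁ v0 =
        missingColors (G.deleteEdges {s(r, s₁)}) Δ φ v0 := by
    intro v0 h
    rw [hφ₁def]
    exact swapC_missing_of_not_reach _ _ h
  have hmr : ∀ {v0 : V} {c : ℕ}, (chainGraph (G.deleteEdges {s(r, s₁)}) φ δ lam).Reachable
      ((s₁ :: rest)[j]'hj) v0 →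
      (c ∈ missingColors (G.deleteEdges {s(r, s₁)}) Δ φ₁ v0 ↔
        csw δ lam c ∈ missingColors (G.deleteEdges {s(r, s₁)}) Δ φ v0) := by
    intro v0 c h
    rw [hφ₁def]
    exact swapC_missing_of_reach _ _ hδrg hlamrg h
  have htrans : ∀ (L : List V), FanPath G Δ φ r s₁ L →
      (∀ k (hk : k < L.length), L[k]'hk = (s₁ :: rest)[j]'hj → k = L.length - 1) →
      FanPath G Δ φ₁ r s₁ L := by
    intro L hL hLj
    refine ⟨hL.len_pos, hL.head, hL.nodup, hL.adj, ?_⟩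
    intro k hk1
    have hpres : φ₁ (s(r, L[k+1]'hk1)) = φ (s(r, L[k+1]'hk1)) := by
      rw [hφ₁def]
      exact swapC_eq_of_not_reach (hL.edge_mem hk1 (by omega)) (Sym2.mem_mk_left _ _) hRr
    rw [hpres]
    have hstep := hL.step k hk1
    by_cases hRk : (chainGraph (G.deleteEdges {s(r, s₁)}) φ δ lam).Reachable
        ((s₁ :: rest)[j]'hj) (L[k]'(by omega))
    · have hcδ : φ (s(r, L[k+1]'hk1)) ≠ δ := by
        intro hcd
        by_cases hcsi : L[k]'(by omega) = (s₁ :: rest)[i]'hi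
        · exact hRi (hcsi ▸ hRk)
        · exact no_common hΔ hGadj hnoext hφ (fanPath_take hL (by omega)) hPi0
            (take_last (by omega) (by rw [List.length_take]; omega)) hPi0last hcsi δ
            (hcd ▸ hstep) hδ
      have hclam : φ (s(r, L[k+1]'hk1)) ≠ lam := by
        intro hcl
        by_cases hcsj : L[k]'(by omega) = (s₁ :: rest)[j]'hj
        · have := hLj k (by omega) hcsj
          omega
        · exact no_common hΔ hGadj hnoext hφ (fanPath_take hL (by omega)) hPj
            (take_last (by omega) (by rw [List.length_take]; omega)) hPjlast hcsj lam
            (hcl ▸ hstep) hlam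
      rw [hmr hRk, csw_of_ne hcδ hclam]
      exact hstep
    · rw [hmnr hRk]
      exact hstep
  have hPi' := htrans Pi hPi (fun k hk hkj => absurd hkj (hPisupp _ (Pi.getElem_mem hk)))
  have hPj' := htrans Pj hPj (fun k hk hkj => by
    have heq : Pj[k]'hk = Pj[Pj.length - 1]'(by have := hPj.len_pos; omega) := by
      rw [hkj, hPjlast]
    have := (hPj.nodup.getElem_inj_iff).mp heq
    omega)
  have hδi' : δ ∈ missingColors (G.deleteEdges {s(r, s₁)}) Δ φ₁ ((s₁ :: rest)[i]'hi) := by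
    rw [hmnr hRi]
    exact hδ
  have hδj' : δ ∈ missingColors (G.deleteEdges {s(r, s₁)}) Δ φ₁ ((s₁ :: rest)[j]'hj) := by
    rw [hmr (SimpleGraph.Reachable.refl _), csw_left]
    exact hlam
  exact no_common hΔ hGadj hnoext hφ₁p hPi' hPj' hPilast hPjlast hij' δ hδi' hδj'
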